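/- In the rank-2 cluster pattern with initial exchange matrix B=[[0,b],[-c,0]] (b,c≥0, bc≥4), the only labeled seeds containing an initial cluster variable are Σ_0, Σ_1 and Σ_{−1}; equivalently, for |n|≥2 both d-vectors d_{1;n} and d_{2;n} are nonnegative and nonzero. -/

import Mathlib

open Matrix

/-- The rank-2 `D`-matrix given by the Chebyshev formulas (even/odd cases). -/
def chebDMatrix (S : ℤ → ℝ) (b c : ℤ) (n : ℤ) : Matrix (Fin 2) (Fin 2) ℝ :=
  if n % 2 = 0 then
    !![S ((n - 2) / 2) + S ((n - 4) / 2), (b : ℝ) * S ((n - 2) / 2);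
       (c : ℝ) * S ((n - 4) / 2), S ((n - 2) / 2) + S ((n - 4) / 2)]
  else
    !![S ((n - 1) / 2) + S ((n - 3) / 2), (b : ℝ) * S ((n - 3) / 2);
       (c : ℝ) * S ((n - 3) / 2), S ((n - 3) / 2) + S ((n - 5) / 2)]

lemma cheb_good (S : ℤ → ℝ) (hneg : ∀ p : ℤ, -1 ≤ p → 0 ≤ S p)
    (hpos : ∀ p : ℤ, 0 ≤ p → 1 ≤ S p)
    (b c : ℤ) (hb : 0 ≤ b) (hc : 0 ≤ c) (n : ℤ) (hn : 2 ≤ n) :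
    (∀ i j : Fin 2, 0 ≤ chebDMatrix S b c n i j) ∧
      (∀ i : Fin 2, 0 < chebDMatrix S b c n i i) := by
  have hbR : (0:ℝ) ≤ (b:ℝ) := by exact_mod_cast hb
  have hcR : (0:ℝ) ≤ (c:ℝ) := by exact_mod_cast hc
  unfold chebDMatrix
  by_cases h : n % 2 = 0
  · simp only [h, if_pos rfl]
    have h1 : (0:ℤ) ≤ (n-2)/2 := by omega
    have h2 : (-1:ℤ) ≤ (n-4)/2 := by omega
    have s1 := hpos _ h1
    have s2 := hneg _ h2
    constructor
    · intro i j
      fin_cases i <;> fin_cases j <;>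
        simp [Matrix.cons_val_zero, Matrix.cons_val_one, Matrix.head_cons] <;>
        first
          | linarith
          | positivity
    · intro i
      fin_cases i <;>
        simp [Matrix.cons_val_zero, Matrix.cons_val_one, Matrix.head_cons] <;>
        linarith
  · simp only [h, if_neg h]
    have h3 : n % 2 = 1 := by omega
    have h1 : (1:ℤ) ≤ (n-1)/2 := by omega
    have h2 : (0:ℤ) ≤ (n-3)/2 := by omega
    have h4 : (-1:ℤ) ≤ (n-5)/2 := by omega
    have s1 := hpos _ (by omega : (0:ℤ) ≤ (n-1)/2)
    have s2 := hpos _ h2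
    have s3 := hneg _ h4
    constructor
    · intro i j
      fin_cases i <;> fin_cases j <;>
        simp [Matrix.cons_val_zero, Matrix.cons_val_one, Matrix.head_cons] <;>
        first
          | linarith
          | positivity
    · intro i
      fin_cases i <;>
        simp [Matrix.cons_val_zero, Matrix.cons_val_one, Matrix.head_cons] <;>
        linarith

theorem rank2_noninitial_d_vectors_nonneg_nonzero
    (S : ℝ → ℤ → ℝ)
    (hSm1 : ∀ u : ℝ, S u (-1) = 0)
    (hS0 : ∀ u : ℝ, S u 0 = 1)
    (hSrec : ∀ (u : ℝ) (p : ℤ), 1 ≤ p → S u p = u * S u (p - 1) - S u (p - 2))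
    (b c : ℤ) (hb : 0 ≤ b) (hc : 0 ≤ c) (hbc : 4 ≤ b * c)
    (D : ℤ → Matrix (Fin 2) (Fin 2) ℝ)
    (hDpos : ∀ n : ℤ, 2 ≤ n → D n = chebDMatrix (S ((b * c - 2 : ℤ) : ℝ)) b c n)
    (hDneg : ∀ n : ℤ, n ≤ -2 → ∀ i j : Fin 2,
      D n i j = chebDMatrix (S ((b * c - 2 : ℤ) : ℝ)) c b (-n) (1 - i) (1 - j)) :
    ∀ n : ℤ, 2 ≤ |n| → ∀ j : Fin 2,
      (∀ i : Fin 2, 0 ≤ D n i j) ∧ (∃ i : Fin 2, D n i j ≠ 0) := by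
  set u : ℝ := ((b * c - 2 : ℤ) : ℝ) with hu
  have huge : (2:ℝ) ≤ u := by
    rw [hu]; exact_mod_cast (by omega : (2:ℤ) ≤ b * c - 2)
  have key : ∀ p : ℤ, 0 ≤ p → 0 ≤ S u (p - 1) ∧ S u (p - 1) + 1 ≤ S u p := by
    intro p hp
    refine Int.le_induction (motive := fun q _ => 0 ≤ S u (q - 1) ∧ S u (q - 1) + 1 ≤ S u q) ?_ ?_ p hp
    · norm_num [hSm1 u, hS0 u]
    · intro p hp ih
      obtain ⟨ih1, ih2⟩ := ih
      have hSp : 0 ≤ S u p := by linarith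
      have hrec := hSrec u (p + 1) (by omega)
      have e1 : p + 1 - 1 = p := by ring
      have e2 : p + 1 - 2 = p - 1 := by ring
      rw [e1, e2] at hrec
      constructor
      · simpa [e1] using hSp
      · rw [e1, hrec]
        nlinarith
  have hneg : ∀ p : ℤ, -1 ≤ p → 0 ≤ S u p := by
    intro p hp
    have := (key (p + 1) (by omega)).1
    simpa using this
  have hpos : ∀ p : ℤ, 0 ≤ p → 1 ≤ S u p := by
    intro p hp
    have h := key p hp
    have := hneg (p - 1) (by omega)
    linarith [h.2]
  intro n hn j
  have hcase : 2 ≤ n ∨ n ≤ -2 := by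
    rcases abs_cases n with ⟨h1, h2⟩ | ⟨h1, h2⟩ <;> omega
  rcases hcase with hpn | hnn
  · have hD := hDpos n hpn
    have hg := cheb_good (S u) hneg hpos b c hb hc n hpn
    constructor
    · intro i; rw [hD]; exact hg.1 i j
    · exact ⟨j, by rw [hD]; exact ne_of_gt (hg.2 j)⟩
  · have hg := cheb_good (S u) hneg hpos c b hc hb (-n) (by omega)
    constructor
    · intro i; rw [hDneg n hnn i j]; exact hg.1 _ _
    · exact ⟨j, by rw [hDneg n hnn j j]; exact ne_of_gt (hg.2 (1 - j))⟩
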